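/- (Riccati comparison for bounded existence.) Let M_1, M_2 be constant real d×d matrices with M_1 symmetric positive semidefinite, and let N_1 ≥ N_2 (i.e., N_1 − N_2 PSD) be symmetric. Suppose the terminal value problem H_1' + H_1 M_1 H_1 + M_2^T H_1 + H_1 M_2 + N_1 = 0, H_1(T) = S_1, has a symmetric solution on [0,T], and S_1 ≥ S_2 (PSD order). Then the terminal value problem H_2' + H_2 M_1 H_2 + M_2^T H_2 + H_2 M_2 + N_2 = 0, H_2(T) = S_2, has a solution on [0,T] and H_1(t) ≥ H_2(t) for all t ∈ [0,T]. -/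

import Mathlib

open Matrix Set Filter intervalIntegral MeasureTheory

attribute [local instance] Matrix.normedAddCommGroup Matrix.normedSpace

set_option maxHeartbeats 1000000

section aux
variable {d : ℕ}
local notation "Mat" => Matrix (Fin d) (Fin d) ℝ

lemma mat_norm_mul_le (A B : Mat) : ‖A * B‖ ≤ d * ‖A‖ * ‖B‖ := by
  rw [Matrix.norm_le_iff (by positivity)]
  intro i j
  calc ‖(A * B) i j‖ = ‖∑ k, A i k * B k j‖ := by rw [Matrix.mul_apply]
    _ ≤ ∑ k, ‖A i k * B k j‖ := norm_sum_le _ _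
    _ ≤ ∑ _k : Fin d, ‖A‖ * ‖B‖ := by
        refine Finset.sum_le_sum fun k _ => ?_
        rw [norm_mul]
        exact mul_le_mul (Matrix.norm_entry_le_entrywise_sup_norm A)
          (Matrix.norm_entry_le_entrywise_sup_norm B) (norm_nonneg _) (norm_nonneg _)
    _ = d * ‖A‖ * ‖B‖ := by simp [mul_assoc]

lemma mat_norm_mulVec_le (A : Mat) (v : Fin d → ℝ) : ‖A.mulVec v‖ ≤ d * ‖A‖ * ‖v‖ := by
  rw [pi_norm_le_iff_of_nonneg (by positivity)]
  intro i
  calc ‖(A.mulVec v) i‖ = ‖∑ k, A i k * v k‖ := by rw [Matrix.mulVec, dotProduct]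
    _ ≤ ∑ k, ‖A i k * v k‖ := norm_sum_le _ _
    _ ≤ ∑ _k : Fin d, ‖A‖ * ‖v‖ := by
        refine Finset.sum_le_sum fun k _ => ?_
        rw [norm_mul]
        exact mul_le_mul (Matrix.norm_entry_le_entrywise_sup_norm A)
          (norm_le_pi_norm v k) (norm_nonneg _) (norm_nonneg _)
    _ = d * ‖A‖ * ‖v‖ := by simp [mul_assoc]

lemma isBBM_mat_mul : IsBoundedBilinearMap ℝ (fun p : Mat × Mat => p.1 * p.2) where
  add_left := fun x₁ x₂ y => add_mul x₁ x₂ y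
  smul_left := fun c x y => smul_mul_assoc c x y
  add_right := fun x y₁ y₂ => mul_add x y₁ y₂
  smul_right := fun c x y => mul_smul_comm c x y
  bound := ⟨d + 1, by positivity, fun x y => by
    calc ‖x * y‖ ≤ d * ‖x‖ * ‖y‖ := mat_norm_mul_le x y
      _ ≤ (d + 1) * ‖x‖ * ‖y‖ := by
          have := norm_nonneg x; have := norm_nonneg y; nlinarith⟩

lemma HasDerivAt.matMul {P R : ℝ → Mat} {P' R' : Mat} {t : ℝ}
    (hP : HasDerivAt P P' t) (hR : HasDerivAt R R' t) :
    HasDerivAt (fun s => P s * R s) (P t * R' + P' * R t) t := by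
  have h := (isBBM_mat_mul.hasFDerivAt (P t, R t)).comp_hasDerivAt t (hP.prodMk hR)
  simp [IsBoundedBilinearMap.deriv_apply, Function.comp_def] at h
  exact h

lemma LinearMap.hasDerivAt_comp' {M N : Type*} [NormedAddCommGroup M] [NormedSpace ℝ M]
    [NormedAddCommGroup N] [NormedSpace ℝ N] [FiniteDimensional ℝ M]
    (e : M →ₗ[ℝ] N) {f : ℝ → M} {f' : M} {t : ℝ} (h : HasDerivAt f f' t) :
    HasDerivAt (fun s => e (f s)) (e f') t := by
  have := (LinearMap.toContinuousLinearMap e).hasFDerivAt (x := f t) |>.comp_hasDerivAt t h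
  simpa [Function.comp_def] using this

lemma HasDerivAt.matTranspose {P : ℝ → Mat} {P' : Mat} {t : ℝ}
    (hP : HasDerivAt P P' t) : HasDerivAt (fun s => (P s)ᵀ) P'ᵀ t := by
  let e : Mat →ₗ[ℝ] Mat :=
    { toFun := fun A => Aᵀ
      map_add' := fun A B => Matrix.transpose_add A B
      map_smul' := fun c A => Matrix.transpose_smul c A }
  have := (LinearMap.toContinuousLinearMap e).hasFDerivAt (x := P t) |>.comp_hasDerivAt t hP
  simp [e, Function.comp_def] at this
  exact this

lemma HasDerivAt.matMulVec {P : ℝ → Mat} {P' : Mat} {t : ℝ} (v : Fin d → ℝ)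
    (hP : HasDerivAt P P' t) : HasDerivAt (fun s => (P s).mulVec v) (P'.mulVec v) t := by
  let e : Mat →ₗ[ℝ] (Fin d → ℝ) :=
    { toFun := fun A => A.mulVec v
      map_add' := fun A B => Matrix.add_mulVec A B v
      map_smul' := fun c A => Matrix.smul_mulVec c A v }
  have := (LinearMap.toContinuousLinearMap e).hasFDerivAt (x := P t) |>.comp_hasDerivAt t hP
  simp [e, Function.comp_def] at this
  exact this

lemma isBBM_dot : IsBoundedBilinearMap ℝ (fun p : (Fin d → ℝ) × (Fin d → ℝ) => p.1 ⬝ᵥ p.2) where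
  add_left := fun x₁ x₂ y => add_dotProduct x₁ x₂ y
  smul_left := fun c x y => smul_dotProduct c x y
  add_right := fun x y₁ y₂ => dotProduct_add x y₁ y₂
  smul_right := fun c x y => dotProduct_smul c x y
  bound := ⟨d + 1, by positivity, fun x y => by
    have : ‖x ⬝ᵥ y‖ ≤ d * ‖x‖ * ‖y‖ := by
      calc ‖x ⬝ᵥ y‖ ≤ ∑ k, ‖x k * y k‖ := norm_sum_le _ _
        _ ≤ ∑ _k : Fin d, ‖x‖ * ‖y‖ := by
            refine Finset.sum_le_sum fun k _ => ?_
            rw [norm_mul]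
            exact mul_le_mul (norm_le_pi_norm x k) (norm_le_pi_norm y k)
              (norm_nonneg _) (norm_nonneg _)
        _ = d * ‖x‖ * ‖y‖ := by simp [mul_assoc]
    have hx := norm_nonneg x; have hy := norm_nonneg y
    nlinarith⟩

lemma HasDerivAt.dotProd {x y : ℝ → Fin d → ℝ} {x' y' : Fin d → ℝ} {t : ℝ}
    (hx : HasDerivAt x x' t) (hy : HasDerivAt y y' t) :
    HasDerivAt (fun s => x s ⬝ᵥ y s) (x t ⬝ᵥ y' + x' ⬝ᵥ y t) t := by
  have h := (isBBM_dot.hasFDerivAt (x t, y t)).comp_hasDerivAt t (hx.prodMk hy)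
  simp [IsBoundedBilinearMap.deriv_apply, Function.comp_def] at h
  exact h

lemma hasDerivAt_matrix_inv {X : ℝ → Mat} {X' : Mat} {τ : ℝ}
    (hX : HasDerivAt X X' τ) (h : IsUnit (X τ).det) :
    HasDerivAt (fun s => (X s)⁻¹) (-((X τ)⁻¹ * X' * (X τ)⁻¹)) τ := by
  have hXc : ContinuousAt X τ := hX.continuousAt
  have hdet : ContinuousAt (fun s => (X s).det) τ :=
    ((continuous_id.matrix_det).continuousAt).comp hXc
  have hne : (X τ).det ≠ 0 := by
    simpa [isUnit_iff_ne_zero] using h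
  have hev : ∀ᶠ s in nhds τ, IsUnit (X s).det := by
    filter_upwards [hdet.eventually_ne hne] with s hs
    simpa [isUnit_iff_ne_zero] using hs
  set G : ℝ → Mat := fun s => (X s)⁻¹ with hGdef
  have hGc : ContinuousAt G τ := by
    have : ContinuousAt (fun s => (Ring.inverse (X s).det) • (X s).adjugate) τ := by
      apply ContinuousAt.smul (f := fun s => Ring.inverse (X s).det) (g := fun s => (X s).adjugate)
      · simp only [Ring.inverse_eq_inv']
        exact hdet.inv₀ hne
      · exact ((continuous_id.matrix_adjugate).continuousAt).comp hXc
    refine this.congr ?_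
    filter_upwards [] with s
    exact (Matrix.inv_def (X s)).symm
  apply hasDerivAt_iff_tendsto_slope.2
  have hXslope := hasDerivAt_iff_tendsto_slope.1 hX
  have hmul : Continuous (fun p : Mat × Mat => p.1 * p.2) :=
    Continuous.matrix_mul continuous_fst continuous_snd
  have htend : Tendsto (fun s => G s * (-(slope X τ s)) * G τ) (nhdsWithin τ {τ}ᶜ)
      (nhds (G τ * (-X') * G τ)) := by
    have h1 : Tendsto G (nhdsWithin τ {τ}ᶜ) (nhds (G τ)) :=
      (hGc.mono_left nhdsWithin_le_nhds)
    have h2 : Tendsto (fun s => -(slope X τ s)) (nhdsWithin τ {τ}ᶜ) (nhds (-X')) :=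
      hXslope.neg
    have hm1 : Tendsto (fun s => G s * (-(slope X τ s))) (nhdsWithin τ {τ}ᶜ)
        (nhds (G τ * (-X'))) := (hmul.tendsto _).comp (h1.prodMk_nhds h2)
    exact (hmul.tendsto _).comp (hm1.prodMk_nhds tendsto_const_nhds)
  have hval : G τ * (-X') * G τ = -((X τ)⁻¹ * X' * (X τ)⁻¹) := by
    simp [hGdef, Matrix.mul_neg, Matrix.neg_mul]
  rw [hval] at htend
  refine htend.congr' ?_
  · filter_upwards [(hev.filter_mono nhdsWithin_le_nhds),
      self_mem_nhdsWithin] with s hs hsne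
    have hXsG : X s * G s = 1 := Matrix.mul_nonsing_inv _ hs
    have hGXs : G s * X s = 1 := Matrix.nonsing_inv_mul _ hs
    have hXG : X τ * G τ = 1 := Matrix.mul_nonsing_inv _ h
    have hkey : G s - G τ = G s * (X τ - X s) * G τ := by
      rw [Matrix.mul_sub, Matrix.sub_mul]
      rw [show G s * X τ * G τ = G s * (X τ * G τ) by rw [Matrix.mul_assoc]]
      rw [hXG, hGXs]
      simp
    show G s * (-(slope X τ s)) * G τ = slope G τ s
    rw [slope_def_module, slope_def_module, hkey, ← smul_neg, neg_sub,
      Matrix.mul_smul, Matrix.smul_mul]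


lemma psd_mulVec_eq_zero {P : Mat} (hP : P.PosSemidef) {w : Fin d → ℝ}
    (h : w ⬝ᵥ P.mulVec w = 0) : P.mulVec w = 0 := by
  exact (hP.dotProduct_mulVec_zero_iff w).1 (by rwa [star_trivial])


end aux

theorem picard_global {E : Type*} [NormedAddCommGroup E] [NormedSpace ℝ E] [CompleteSpace E]
    (F : ℝ → E → E) (K : NNReal) (hlip : ∀ t, LipschitzWith K (F t))
    (hcont : Continuous (Function.uncurry F))
    (a b : ℝ) (hab : a ≤ b) (z0 : E) :
    ∃ Z : ℝ → E, Continuous Z ∧ Z a = z0 ∧ ∀ t ∈ Set.Icc a b, HasDerivAt Z (F t (Z t)) t := by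
  set I : Set ℝ := Set.Icc a b with hI
  haveI : Nonempty I := ⟨⟨a, by simp [hI, hab]⟩⟩
  haveI : CompactSpace I := isCompact_iff_compactSpace.mp isCompact_Icc
  set π : ℝ → I := fun t => Set.projIcc a b hab t with hπ
  have hπc : Continuous π := continuous_projIcc
  have hπmem : ∀ (t : ℝ) (ht : t ∈ I), π t = ⟨t, ht⟩ := fun t ht =>
    Set.projIcc_of_mem hab ht
  -- integrand associated to u
  have hcu : ∀ u : C(I, E), Continuous (fun s : ℝ => F s (u (π s))) := by
    intro u
    exact hcont.comp (continuous_id.prodMk (u.continuous.comp hπc))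
  set raw : C(I, E) → ℝ → E := fun u t => z0 + ∫ s in a..t, F s (u (π s)) with hraw
  have hderiv : ∀ (u : C(I, E)) (t : ℝ), HasDerivAt (raw u) (F t (u (π t))) t := by
    intro u t
    have h := ((hcu u).integral_hasStrictDerivAt a t).hasDerivAt
    simpa [hraw] using h.const_add z0
  have hrawc : ∀ u : C(I, E), Continuous (raw u) :=
    fun u => Differentiable.continuous fun t => (hderiv u t).differentiableAt
  set Φ : C(I, E) → C(I, E) :=
    fun u => ⟨fun t => raw u t, (hrawc u).comp continuous_subtype_val⟩ with hΦ
  -- key iterated estimate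
  have key : ∀ (n : ℕ) (u v : C(I, E)) (t : I),
      dist ((Φ^[n] u) t) ((Φ^[n] v) t) ≤ (K * ((t : ℝ) - a)) ^ n / n.factorial * dist u v := by
    intro n
    induction n with
    | zero => intro u v t; simpa using ContinuousMap.dist_apply_le_dist t
    | succ n ih =>
      intro u v t
      rw [Function.iterate_succ_apply', Function.iterate_succ_apply']
      set p := Φ^[n] u with hp
      set q := Φ^[n] v with hq
      have hta : a ≤ (t : ℝ) := t.2.1
      have htb : (t : ℝ) ≤ b := t.2.2
      have hint_p : IntervalIntegrable (fun s => F s (p (π s))) volume a t :=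
        (hcu p).intervalIntegrable a t
      have hint_q : IntervalIntegrable (fun s => F s (q (π s))) volume a t :=
        (hcu q).intervalIntegrable a t
      have hval : (Φ p) t - (Φ q) t
          = ∫ s in a..(t : ℝ), (F s (p (π s)) - F s (q (π s))) := by
        show raw p t - raw q t = _
        rw [hraw]
        simp only [add_sub_add_left_eq_sub]
        rw [intervalIntegral.integral_sub hint_p hint_q]
      have hnormbound : ∀ s ∈ Set.Icc a (t : ℝ),
          ‖F s (p (π s)) - F s (q (π s))‖
            ≤ (K : ℝ) * ((K * (s - a)) ^ n / n.factorial * dist u v) := by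
        intro s hs
        have h1 : ‖F s (p (π s)) - F s (q (π s))‖ ≤ (K : ℝ) * dist (p (π s)) (q (π s)) := by
          rw [← dist_eq_norm]
          exact (hlip s).dist_le_mul _ _
        have hsmem : s ∈ I := ⟨hs.1, le_trans hs.2 htb⟩
        have h2 := ih u v (π s)
        have hπs : ((π s : ℝ)) = s := by rw [hπmem s hsmem]
        rw [hπs] at h2
        calc ‖F s (p (π s)) - F s (q (π s))‖ ≤ (K : ℝ) * dist (p (π s)) (q (π s)) := h1
          _ ≤ (K : ℝ) * ((K * (s - a)) ^ n / n.factorial * dist u v) := by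
              apply mul_le_mul_of_nonneg_left _ (NNReal.coe_nonneg K)
              exact h2
      have hcont_norm : Continuous (fun s => ‖F s (p (π s)) - F s (q (π s))‖) :=
        ((hcu p).sub (hcu q)).norm
      calc dist ((Φ p) t) ((Φ q) t)
          = ‖∫ s in a..(t : ℝ), (F s (p (π s)) - F s (q (π s)))‖ := by
            rw [dist_eq_norm, hval]
        _ ≤ ∫ s in a..(t : ℝ), ‖F s (p (π s)) - F s (q (π s))‖ := by
            exact intervalIntegral.norm_integral_le_integral_norm hta
        _ ≤ ∫ s in a..(t : ℝ),
              (K : ℝ) * ((K * (s - a)) ^ n / n.factorial * dist u v) := by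
            apply intervalIntegral.integral_mono_on hta
              (hcont_norm.intervalIntegrable a t)
              (Continuous.intervalIntegrable (by fun_prop) a t)
            exact hnormbound
        _ = (K : ℝ) ^ (n + 1) / n.factorial * dist u v
              * ∫ s in a..(t : ℝ), (s - a) ^ n := by
            rw [← intervalIntegral.integral_const_mul]
            congr 1
            ext s
            rw [mul_pow]
            ring
        _ = (K * ((t : ℝ) - a)) ^ (n + 1) / (n + 1).factorial * dist u v := by
            have : (∫ s in a..(t : ℝ), (s - a) ^ n) = ((t : ℝ) - a) ^ (n + 1) / (n + 1) := by
              rw [intervalIntegral.integral_comp_sub_right (fun x => x ^ n) a]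
              simp [integral_pow]
            rw [this, Nat.factorial_succ, mul_pow]
            push_cast
            have hfac : (n.factorial : ℝ) ≠ 0 := by positivity
            field_simp
  -- sup-norm contraction of an iterate
  have key2 : ∀ n (u v : C(I, E)),
      dist (Φ^[n] u) (Φ^[n] v) ≤ (K * (b - a)) ^ n / n.factorial * dist u v := by
    intro n u v
    have hcoef : (0:ℝ) ≤ (K * (b - a)) ^ n / n.factorial * dist u v := by
      have : (0:ℝ) ≤ (K : ℝ) * (b - a) := by
        have := sub_nonneg.mpr hab
        positivity
      positivity
    rw [ContinuousMap.dist_le hcoef]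
    intro t
    refine (key n u v t).trans ?_
    have h1 : (0:ℝ) ≤ (K : ℝ) * ((t : ℝ) - a) := by
      have := sub_nonneg.mpr t.2.1
      positivity
    have hfac : (0:ℝ) < n.factorial := by positivity
    apply mul_le_mul_of_nonneg_right _ dist_nonneg
    apply (div_le_div_iff_of_pos_right hfac).mpr
    apply pow_le_pow_left₀ h1
    exact mul_le_mul_of_nonneg_left (sub_le_sub_right t.2.2 a) (NNReal.coe_nonneg K)
  -- pick n making the iterate a contraction
  obtain ⟨n, hn⟩ : ∃ n : ℕ, (K * (b - a)) ^ n / n.factorial < 1 := by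
    have h := FloorSemiring.tendsto_pow_div_factorial_atTop ((K : ℝ) * (b - a))
    exact (h.eventually_lt_const (by norm_num : (0:ℝ) < 1)).exists
  set c : ℝ := (K * (b - a)) ^ n / n.factorial with hc
  have hc0 : 0 ≤ c := by
    have : (0:ℝ) ≤ (K : ℝ) * (b - a) := by
      have := sub_nonneg.mpr hab
      positivity
    positivity
  have hcontr : ContractingWith c.toNNReal (Φ^[n]) := by
    constructor
    · exact_mod_cast lt_of_le_of_lt (le_of_eq (Real.coe_toNNReal c hc0)) hn
    · apply LipschitzWith.of_dist_le_mul
      intro u v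
      rw [Real.coe_toNNReal c hc0]
      exact key2 n u v
  set w : C(I, E) := hcontr.fixedPoint (Φ^[n]) with hw
  have hwfix : Φ^[n] w = w := hcontr.fixedPoint_isFixedPt
  have hΦw : Φ w = w := by
    have h1 : Function.IsFixedPt (Φ^[n]) (Φ w) := by
      show Φ^[n] (Φ w) = Φ w
      rw [← Function.iterate_succ_apply Φ n w, Function.iterate_succ_apply' Φ n w, hwfix]
    have h2 := hcontr.fixedPoint_unique h1
    rw [h2, ← hw]
  -- the solution
  refine ⟨raw w, hrawc w, ?_, ?_⟩
  · rw [hraw]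
    simp
  · intro t ht
    have h := hderiv w t
    have hval : raw w t = w ⟨t, ht⟩ := by
      have : raw w t = (Φ w) ⟨t, ht⟩ := rfl
      rw [this, hΦw]
    rw [hπmem t ht] at h
    rw [hval]
    exact h

theorem riccati_comparison
    {d : ℕ} (T : ℝ) (hT : 0 < T)
    (M1 M2 N1 N2 S1 S2 : Matrix (Fin d) (Fin d) ℝ)
    (hM1 : M1.PosSemidef)
    (hN1 : N1ᵀ = N1) (hN2 : N2ᵀ = N2) (hN : (N1 - N2).PosSemidef)
    (hS1 : S1ᵀ = S1) (hS2 : S2ᵀ = S2) (hS : (S1 - S2).PosSemidef)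
    (H1 : ℝ → Matrix (Fin d) (Fin d) ℝ)
    (hH1sym : ∀ t ∈ Set.Icc (0 : ℝ) T, (H1 t)ᵀ = H1 t)
    (hH1 : ∀ t ∈ Set.Icc (0 : ℝ) T,
      HasDerivAt H1 (-(H1 t * M1 * H1 t + M2ᵀ * H1 t + H1 t * M2 + N1)) t)
    (hH1T : H1 T = S1) :
    ∃ H2 : ℝ → Matrix (Fin d) (Fin d) ℝ,
      (∀ t ∈ Set.Icc (0 : ℝ) T, (H2 t)ᵀ = H2 t)
      ∧ (∀ t ∈ Set.Icc (0 : ℝ) T,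
          HasDerivAt H2 (-(H2 t * M1 * H2 t + M2ᵀ * H2 t + H2 t * M2 + N2)) t)
      ∧ H2 T = S2
      ∧ ∀ t ∈ Set.Icc (0 : ℝ) T, (H1 t - H2 t).PosSemidef := by
  -- clamping to [0, T]
  set π : ℝ → ℝ := fun t => max 0 (min T t) with hπdef
  have hπmem : ∀ t, π t ∈ Set.Icc (0:ℝ) T :=
    fun t => ⟨le_max_left _ _, max_le hT.le (min_le_left _ _)⟩
  have hπid : ∀ t ∈ Set.Icc (0:ℝ) T, π t = t := by
    intro t ht
    rw [hπdef]
    simp only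
    rw [min_eq_right ht.2, max_eq_right ht.1]
  have hπc : Continuous π := continuous_const.max (continuous_const.min continuous_id)
  have hH1cont : ∀ t ∈ Set.Icc (0:ℝ) T, ContinuousAt H1 t := fun t ht => (hH1 t ht).continuousAt
  set H1c : ℝ → Matrix (Fin d) (Fin d) ℝ := fun t => H1 (π t) with hH1cdef
  have hH1cc : Continuous H1c := continuous_iff_continuousAt.mpr
    (fun t => ((hH1cont _ (hπmem t)).comp hπc.continuousAt))
  have hH1ceq : ∀ t ∈ Set.Icc (0:ℝ) T, H1c t = H1 t := fun t ht => by
    rw [hH1cdef]; simp only; rw [hπid t ht]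
  -- uniform bound for H1c
  obtain ⟨C, hC0, hC⟩ : ∃ C, 0 ≤ C ∧ ∀ t, ‖H1c t‖ ≤ C := by
    obtain ⟨C₁, hC₁⟩ := (isCompact_Icc (a := (0:ℝ)) (b := T)).exists_bound_of_continuousOn
      hH1cc.continuousOn
    refine ⟨max C₁ 0, le_max_right _ _, fun t => ?_⟩
    have h1 : π (π t) = π t := hπid _ (hπmem t)
    have := hC₁ (π t) (hπmem t)
    rw [hH1cdef] at this ⊢
    simp only at this ⊢
    rw [h1] at this
    exact this.trans (le_max_left _ _)
  -- coefficient matrix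
  set A : ℝ → Matrix (Fin d) (Fin d) ℝ := fun τ => M1 * H1c (T - τ) + M2 with hAdef
  have hAc : Continuous A :=
    (continuous_const.matrix_mul (hH1cc.comp (continuous_const.sub continuous_id))).add
      continuous_const
  set CA : ℝ := d * ‖M1‖ * C + ‖M2‖ with hCAdef
  have hCA0 : (0:ℝ) ≤ CA := by positivity
  have hAb : ∀ τ, ‖A τ‖ ≤ CA := by
    intro τ
    refine (norm_add_le _ _).trans (add_le_add ?_ le_rfl)
    refine (mat_norm_mul_le _ _).trans ?_
    have : (0:ℝ) ≤ d * ‖M1‖ := by positivity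
    exact mul_le_mul_of_nonneg_left (hC _) this
  set Q : Matrix (Fin d) (Fin d) ℝ := N1 - N2 with hQdef
  set S : Matrix (Fin d) (Fin d) ℝ := S1 - S2 with hSdef
  have hQt : Qᵀ = Q := by rw [hQdef, Matrix.transpose_sub, hN1, hN2]
  have hSt : Sᵀ = S := by rw [hSdef, Matrix.transpose_sub, hS1, hS2]
  -- the linear Hamiltonian system
  set F : ℝ → (Matrix (Fin d) (Fin d) ℝ × Matrix (Fin d) (Fin d) ℝ) →
      (Matrix (Fin d) (Fin d) ℝ × Matrix (Fin d) (Fin d) ℝ) :=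
    fun τ p => (M1 * p.2 - A τ * p.1, (A τ)ᵀ * p.2 + Q * p.1) with hFdef
  set K0 : ℝ := d * ‖M1‖ + d * CA + d * ‖Q‖ with hK0def
  have hK00 : 0 ≤ K0 := by positivity
  have hlip : ∀ τ, LipschitzWith K0.toNNReal (F τ) := by
    intro τ
    apply LipschitzWith.of_dist_le_mul
    intro p q
    rw [Real.coe_toNNReal _ hK00, Prod.dist_eq]
    have hd1 : ‖p.1 - q.1‖ ≤ dist p q := by
      rw [← dist_eq_norm, Prod.dist_eq]; exact le_max_left _ _
    have hd2 : ‖p.2 - q.2‖ ≤ dist p q := by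
      rw [← dist_eq_norm, Prod.dist_eq]; exact le_max_right _ _
    have hdpq : (0:ℝ) ≤ dist p q := dist_nonneg
    have hb1 : ‖M1 * (p.2 - q.2)‖ ≤ (d : ℝ) * ‖M1‖ * dist p q :=
      (mat_norm_mul_le M1 (p.2 - q.2)).trans
        (mul_le_mul_of_nonneg_left hd2 (by positivity))
    have hbA : ‖A τ * (p.1 - q.1)‖ ≤ (d : ℝ) * CA * dist p q := by
      refine (mat_norm_mul_le (A τ) (p.1 - q.1)).trans ?_
      calc (d:ℝ) * ‖A τ‖ * ‖p.1 - q.1‖ = (d:ℝ) * (‖A τ‖ * ‖p.1 - q.1‖) := by ring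
        _ ≤ (d:ℝ) * (CA * dist p q) := by
            refine mul_le_mul_of_nonneg_left ?_ (Nat.cast_nonneg d)
            exact mul_le_mul (hAb τ) hd1 (norm_nonneg _) hCA0
        _ = (d:ℝ) * CA * dist p q := by ring
    have hbAt : ‖(A τ)ᵀ * (p.2 - q.2)‖ ≤ (d : ℝ) * CA * dist p q := by
      refine (mat_norm_mul_le (A τ)ᵀ (p.2 - q.2)).trans ?_
      rw [Matrix.norm_transpose]
      calc (d:ℝ) * ‖A τ‖ * ‖p.2 - q.2‖ = (d:ℝ) * (‖A τ‖ * ‖p.2 - q.2‖) := by ring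
        _ ≤ (d:ℝ) * (CA * dist p q) := by
            refine mul_le_mul_of_nonneg_left ?_ (Nat.cast_nonneg d)
            exact mul_le_mul (hAb τ) hd2 (norm_nonneg _) hCA0
        _ = (d:ℝ) * CA * dist p q := by ring
    have hbQ : ‖Q * (p.1 - q.1)‖ ≤ (d : ℝ) * ‖Q‖ * dist p q :=
      (mat_norm_mul_le Q (p.1 - q.1)).trans
        (mul_le_mul_of_nonneg_left hd1 (by positivity))
    have hM1n : (0:ℝ) ≤ (d : ℝ) * ‖M1‖ * dist p q := by positivity
    have hQn : (0:ℝ) ≤ (d : ℝ) * ‖Q‖ * dist p q := by positivity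
    have hCAn : (0:ℝ) ≤ (d : ℝ) * CA * dist p q := by positivity
    apply max_le
    · rw [dist_eq_norm]
      have he : (F τ p).1 - (F τ q).1 = M1 * (p.2 - q.2) - A τ * (p.1 - q.1) := by
        rw [hFdef]; simp only; rw [Matrix.mul_sub, Matrix.mul_sub]; abel
      rw [he]
      refine (norm_sub_le _ _).trans ?_
      rw [hK0def]
      nlinarith
    · rw [dist_eq_norm]
      have he : (F τ p).2 - (F τ q).2 = (A τ)ᵀ * (p.2 - q.2) + Q * (p.1 - q.1) := by
        rw [hFdef]; simp only; rw [Matrix.mul_sub, Matrix.mul_sub]; abel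
      rw [he]
      refine (norm_add_le _ _).trans ?_
      rw [hK0def]
      nlinarith
  have hFc : Continuous (Function.uncurry F) := by
    apply Continuous.prodMk
    · exact (continuous_const.matrix_mul (continuous_snd.snd)).sub
        ((hAc.comp continuous_fst).matrix_mul continuous_snd.fst)
    · exact (((hAc.comp continuous_fst).matrix_transpose).matrix_mul continuous_snd.snd).add
        (continuous_const.matrix_mul continuous_snd.fst)
  obtain ⟨Z, hZcont, hZ0, hZd⟩ := picard_global F K0.toNNReal hlip hFc 0 T hT.le (1, S)
  set X : ℝ → Matrix (Fin d) (Fin d) ℝ := fun τ => (Z τ).1 with hXdef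
  set Y : ℝ → Matrix (Fin d) (Fin d) ℝ := fun τ => (Z τ).2 with hYdef
  have hX0 : X 0 = 1 := by rw [hXdef]; simp only; rw [hZ0]
  have hY0 : Y 0 = S := by rw [hYdef]; simp only; rw [hZ0]
  have hXd : ∀ τ ∈ Set.Icc (0:ℝ) T, HasDerivAt X (M1 * Y τ - A τ * X τ) τ := by
    intro τ hτ
    have h := (ContinuousLinearMap.fst ℝ (Matrix (Fin d) (Fin d) ℝ)
      (Matrix (Fin d) (Fin d) ℝ)).hasFDerivAt.comp_hasDerivAt τ (hZd τ hτ)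
    simp [hFdef, hXdef, hYdef, Function.comp_def] at h
    exact h
  have hYd : ∀ τ ∈ Set.Icc (0:ℝ) T, HasDerivAt Y ((A τ)ᵀ * Y τ + Q * X τ) τ := by
    intro τ hτ
    have h := (ContinuousLinearMap.snd ℝ (Matrix (Fin d) (Fin d) ℝ)
      (Matrix (Fin d) (Fin d) ℝ)).hasFDerivAt.comp_hasDerivAt τ (hZd τ hτ)
    simp [hFdef, hXdef, hYdef, Function.comp_def] at h
    exact h
  have hXc : ContinuousOn X (Set.Icc 0 T) :=
    fun τ hτ => ((hXd τ hτ).continuousAt).continuousWithinAt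
  have hYc : ContinuousOn Y (Set.Icc 0 T) :=
    fun τ hτ => ((hYd τ hτ).continuousAt).continuousWithinAt
  have hM1t : M1ᵀ = M1 := by
    have h1 : M1ᴴ = M1 := hM1.1
    rwa [Matrix.conjTranspose_eq_transpose_of_trivial] at h1
  -- symmetry of XᵀY
  have hψeq : ∀ τ ∈ Set.Icc (0:ℝ) T, (X τ)ᵀ * Y τ = (Y τ)ᵀ * X τ := by
    set ψ : ℝ → Matrix (Fin d) (Fin d) ℝ := fun τ => (X τ)ᵀ * Y τ - (Y τ)ᵀ * X τ with hψdef
    have hψd : ∀ τ ∈ Set.Icc (0:ℝ) T, HasDerivAt ψ 0 τ := by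
      intro τ hτ
      have h := ((hXd τ hτ).matTranspose.matMul (hYd τ hτ)).sub
        ((hYd τ hτ).matTranspose.matMul (hXd τ hτ))
      refine h.congr_deriv ?_
      simp only [Matrix.transpose_sub, Matrix.transpose_add, Matrix.transpose_mul,
        Matrix.transpose_transpose, hM1t, hQt]
      noncomm_ring
    have hcont : ContinuousOn ψ (Set.Icc 0 T) :=
      fun τ hτ => ((hψd τ hτ).continuousAt).continuousWithinAt
    have hconst := constant_of_has_deriv_right_zero hcont
      (fun τ hτ => ((hψd τ (Set.Ico_subset_Icc_self hτ)).hasDerivWithinAt))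
    intro τ hτ
    have h0 : ψ 0 = 0 := by
      rw [hψdef]; simp only; rw [hX0, hY0, Matrix.transpose_one, hSt]
      simp
    have hτ0 := hconst τ hτ
    rw [h0] at hτ0
    have : ψ τ = 0 := hτ0
    rw [hψdef] at this
    simp only at this
    exact sub_eq_zero.mp this
  -- derivative of the quadratic functional
  have hφd : ∀ (v : Fin d → ℝ), ∀ τ ∈ Set.Icc (0:ℝ) T,
      HasDerivAt (fun σ => (X σ).mulVec v ⬝ᵥ (Y σ).mulVec v)
        ((Y τ).mulVec v ⬝ᵥ M1.mulVec ((Y τ).mulVec v)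
          + (X τ).mulVec v ⬝ᵥ Q.mulVec ((X τ).mulVec v)) τ := by
    intro v τ hτ
    have h := ((hXd τ hτ).matMulVec v).dotProd ((hYd τ hτ).matMulVec v)
    convert h using 1
    simp only [Matrix.sub_mulVec, Matrix.add_mulVec, ← Matrix.mulVec_mulVec]
    simp only [dotProduct_add, sub_dotProduct]
    rw [Matrix.dotProduct_mulVec ((X τ).mulVec v) (A τ)ᵀ, Matrix.vecMul_transpose,
      dotProduct_comm (M1.mulVec ((Y τ).mulVec v)) _]
    ring
  -- monotonicity of the quadratic functional
  have hφmono : ∀ v : Fin d → ℝ,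
      MonotoneOn (fun τ => (X τ).mulVec v ⬝ᵥ (Y τ).mulVec v) (Set.Icc 0 T) := by
    intro v
    apply monotoneOn_of_deriv_nonneg (convex_Icc 0 T)
    · exact fun τ hτ => ((hφd v τ hτ).continuousAt).continuousWithinAt
    · intro τ hτ
      rw [interior_Icc] at hτ
      exact ((hφd v τ (Set.Ioo_subset_Icc_self hτ)).differentiableAt).differentiableWithinAt
    · intro τ hτ
      rw [interior_Icc] at hτ
      rw [(hφd v τ (Set.Ioo_subset_Icc_self hτ)).deriv]
      have h1 : 0 ≤ (Y τ).mulVec v ⬝ᵥ M1.mulVec ((Y τ).mulVec v) := by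
        simpa using hM1.dotProduct_mulVec_nonneg ((Y τ).mulVec v)
      have h2 : 0 ≤ (X τ).mulVec v ⬝ᵥ Q.mulVec ((X τ).mulVec v) := by
        simpa using hN.dotProduct_mulVec_nonneg ((X τ).mulVec v)
      linarith
  have hYcont : Continuous Y := continuous_snd.comp hZcont
  -- invertibility of X on [0, T]
  have hXinv : ∀ τ ∈ Set.Icc (0:ℝ) T, IsUnit (X τ).det := by
    intro τ hτ
    by_contra hdet
    have hdet0 : (X τ).det = 0 := by
      by_contra h'
      exact hdet (isUnit_iff_ne_zero.mpr h')
    obtain ⟨v, hv0, hXv⟩ := Matrix.exists_mulVec_eq_zero_iff.mpr hdet0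
    rcases eq_or_lt_of_le hτ.1 with h0 | h0
    · rw [← h0, hX0] at hXv
      exact hv0 (by simpa [Matrix.one_mulVec] using hXv)
    -- now 0 < τ
    set φ : ℝ → ℝ := fun σ => (X σ).mulVec v ⬝ᵥ (Y σ).mulVec v with hφdef
    have hφ0 : 0 ≤ φ 0 := by
      rw [hφdef]; simp only; rw [hX0, hY0, Matrix.one_mulVec]
      simpa using hS.dotProduct_mulVec_nonneg v
    have hφτ : φ τ = 0 := by
      rw [hφdef]; simp only [hXv, zero_dotProduct]
    have hzero : ∀ σ ∈ Set.Icc (0:ℝ) τ, φ σ = 0 := by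
      intro σ hσ
      have hσT : σ ∈ Set.Icc (0:ℝ) T := ⟨hσ.1, hσ.2.trans hτ.2⟩
      have hle1 : φ 0 ≤ φ σ := hφmono v (Set.left_mem_Icc.mpr hT.le) hσT hσ.1
      have hle2 : φ σ ≤ φ τ := hφmono v hσT hτ hσ.2
      linarith
    have hM1y : ∀ σ ∈ Set.Ioo (0:ℝ) τ, M1.mulVec ((Y σ).mulVec v) = 0 := by
      intro σ hσ
      have hσT : σ ∈ Set.Icc (0:ℝ) T := ⟨hσ.1.le, hσ.2.le.trans hτ.2⟩
      have hd := hφd v σ hσT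
      have hev : φ =ᶠ[nhds σ] (fun _ => (0:ℝ)) := by
        filter_upwards [Ioo_mem_nhds hσ.1 hσ.2] with x hx
        exact hzero x (Set.Ioo_subset_Icc_self hx)
      have hd0 : HasDerivAt φ 0 σ :=
        (hasDerivAt_const σ (0:ℝ)).congr_of_eventuallyEq hev
      have huniq := hd.unique hd0
      have h1 : 0 ≤ (Y σ).mulVec v ⬝ᵥ M1.mulVec ((Y σ).mulVec v) := by
        simpa using hM1.dotProduct_mulVec_nonneg ((Y σ).mulVec v)
      have h2 : 0 ≤ (X σ).mulVec v ⬝ᵥ Q.mulVec ((X σ).mulVec v) := by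
        simpa using hN.dotProduct_mulVec_nonneg ((X σ).mulVec v)
      have h3 : (Y σ).mulVec v ⬝ᵥ M1.mulVec ((Y σ).mulVec v) = 0 := by linarith
      exact psd_mulVec_eq_zero hM1 h3
    have hM1yc : ∀ σ ∈ Set.Icc (0:ℝ) τ, M1.mulVec ((Y σ).mulVec v) = 0 := by
      set e : Matrix (Fin d) (Fin d) ℝ →ₗ[ℝ] (Fin d → ℝ) :=
        { toFun := fun B => M1.mulVec (B.mulVec v)
          map_add' := fun B C => by simp [Matrix.add_mulVec, Matrix.mulVec_add]
          map_smul' := fun c B => by simp [Matrix.smul_mulVec, Matrix.mulVec_smul] } with hedef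
      have hgc : Continuous (fun σ => M1.mulVec ((Y σ).mulVec v)) := by
        have h1 : Continuous fun σ => e (Y σ) :=
          (LinearMap.toContinuousLinearMap e).continuous.comp hYcont
        simpa [hedef] using h1
      have heq : Set.EqOn (fun σ => M1.mulVec ((Y σ).mulVec v)) (fun _ => 0)
          (closure (Set.Ioo (0:ℝ) τ)) :=
        Set.EqOn.closure (fun σ hσ => hM1y σ hσ) hgc continuous_const
      rw [closure_Ioo h0.ne] at heq
      exact fun σ hσ => heq hσ
    -- backward uniqueness forces v = 0
    set vf : ℝ → (Fin d → ℝ) → (Fin d → ℝ) :=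
      fun t z => M1.mulVec ((Y t).mulVec v) - (A t).mulVec z with hvfdef
    have hvlip : ∀ t, LipschitzOnWith ((d : ℝ) * CA).toNNReal (vf t) Set.univ := by
      intro t
      apply LipschitzOnWith.of_dist_le_mul
      intro z1 _ z2 _
      rw [Real.coe_toNNReal _ (by positivity : (0:ℝ) ≤ (d:ℝ) * CA)]
      rw [dist_eq_norm, dist_eq_norm]
      have he : vf t z1 - vf t z2 = (A t).mulVec (z2 - z1) := by
        rw [hvfdef]; simp only; rw [Matrix.mulVec_sub]; abel
      rw [he]
      refine (mat_norm_mulVec_le _ _).trans ?_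
      have h1 : ‖z2 - z1‖ = ‖z1 - z2‖ := norm_sub_rev _ _
      rw [h1]
      calc (d:ℝ) * ‖A t‖ * ‖z1 - z2‖ = (d:ℝ) * (‖A t‖ * ‖z1 - z2‖) := by ring
        _ ≤ (d:ℝ) * (CA * ‖z1 - z2‖) := mul_le_mul_of_nonneg_left
            (mul_le_mul_of_nonneg_right (hAb t) (norm_nonneg _)) (Nat.cast_nonneg d)
        _ = (d:ℝ) * CA * ‖z1 - z2‖ := by ring
    have huniq := ODE_solution_unique_of_mem_Icc_left (v := vf) (s := fun _ => Set.univ)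
      (K := ((d : ℝ) * CA).toNNReal) (hv := fun t _ => hvlip t)
      (f := fun σ => (X σ).mulVec v) (g := fun _ => 0) (a := 0) (b := τ)
      (fun σ hσ => (((hXd σ ⟨hσ.1, hσ.2.trans hτ.2⟩).matMulVec v).continuousAt).continuousWithinAt)
      (by
        intro t ht
        have htT : t ∈ Set.Icc (0:ℝ) T := ⟨ht.1.le, ht.2.trans hτ.2⟩
        have hder := (hXd t htT).matMulVec v
        have hval : (M1 * Y t - A t * X t).mulVec v = vf t ((X t).mulVec v) := by
          rw [hvfdef]; simp only
          rw [Matrix.sub_mulVec, ← Matrix.mulVec_mulVec, ← Matrix.mulVec_mulVec]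
        rw [hval] at hder
        exact hder.hasDerivWithinAt)
      (fun t _ => Set.mem_univ _)
      continuousOn_const
      (by
        intro t ht
        have hval : vf t 0 = 0 := by
          rw [hvfdef]; simp only
          rw [hM1yc t (Set.Ioc_subset_Icc_self ht), Matrix.mulVec_zero, sub_zero]
        rw [hval]
        exact (hasDerivWithinAt_const _ _ _)
      )
      (fun t _ => Set.mem_univ _)
      (by simpa using hXv)
    have hv00 : (X 0).mulVec v = 0 :=
      huniq (Set.left_mem_Icc.mpr h0.le)
    rw [hX0, Matrix.one_mulVec] at hv00
    exact hv0 hv00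
  -- the Riccati difference E = Y * X⁻¹
  set G : ℝ → Matrix (Fin d) (Fin d) ℝ := fun σ => (X σ)⁻¹ with hGdef
  set E : ℝ → Matrix (Fin d) (Fin d) ℝ := fun σ => Y σ * G σ with hEdef
  have hYG : ∀ σ, Y σ * G σ = E σ := fun _ => rfl
  have hXG : ∀ τ ∈ Set.Icc (0:ℝ) T, X τ * G τ = 1 :=
    fun τ hτ => Matrix.mul_nonsing_inv _ (hXinv τ hτ)
  have hGX : ∀ τ ∈ Set.Icc (0:ℝ) T, G τ * X τ = 1 :=
    fun τ hτ => Matrix.nonsing_inv_mul _ (hXinv τ hτ)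
  -- symmetry of E
  have hEsym : ∀ τ ∈ Set.Icc (0:ℝ) T, (E τ)ᵀ = E τ := by
    intro τ hτ
    calc (E τ)ᵀ = (G τ)ᵀ * (Y τ)ᵀ := Matrix.transpose_mul _ _
      _ = (G τ)ᵀ * ((Y τ)ᵀ * (X τ * G τ)) := by rw [hXG τ hτ, mul_one]
      _ = (G τ)ᵀ * (((Y τ)ᵀ * X τ) * G τ) := by rw [mul_assoc]
      _ = (G τ)ᵀ * (((X τ)ᵀ * Y τ) * G τ) := by rw [← hψeq τ hτ]
      _ = ((G τ)ᵀ * (X τ)ᵀ) * (Y τ * G τ) := by noncomm_ring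
      _ = (X τ * G τ)ᵀ * E τ := by rw [← Matrix.transpose_mul, hYG]
      _ = E τ := by rw [hXG τ hτ, Matrix.transpose_one, one_mul]
  -- positive semidefiniteness of E
  have hEpsd : ∀ τ ∈ Set.Icc (0:ℝ) T, (E τ).PosSemidef := by
    intro τ hτ
    apply Matrix.PosSemidef.of_dotProduct_mulVec_nonneg
    · show (E τ)ᴴ = E τ
      rw [Matrix.conjTranspose_eq_transpose_of_trivial, hEsym τ hτ]
    · intro w
      set u : Fin d → ℝ := (G τ).mulVec w with hudef
      have hXu : (X τ).mulVec u = w := by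
        rw [hudef, Matrix.mulVec_mulVec, hXG τ hτ, Matrix.one_mulVec]
      have hEw : (E τ).mulVec w = (Y τ).mulVec u := by
        rw [← hYG τ, ← Matrix.mulVec_mulVec, hudef]
      have h1 : (X 0).mulVec u ⬝ᵥ (Y 0).mulVec u ≤ (X τ).mulVec u ⬝ᵥ (Y τ).mulVec u :=
        hφmono u (Set.left_mem_Icc.mpr hT.le) hτ hτ.1
      have h0' : 0 ≤ (X 0).mulVec u ⬝ᵥ (Y 0).mulVec u := by
        rw [hX0, hY0, Matrix.one_mulVec]
        simpa using hS.dotProduct_mulVec_nonneg u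
      have hfin : 0 ≤ w ⬝ᵥ (E τ).mulVec w := by
        rw [hEw, ← hXu]
        linarith
      simpa using hfin
  -- the derivative of E
  have hEd : ∀ τ ∈ Set.Icc (0:ℝ) T, HasDerivAt E
      ((A τ)ᵀ * E τ + Q + E τ * A τ - E τ * M1 * E τ) τ := by
    intro τ hτ
    have hGd : HasDerivAt G (-(G τ * (M1 * Y τ - A τ * X τ) * G τ)) τ :=
      hasDerivAt_matrix_inv (hXd τ hτ) (hXinv τ hτ)
    have h := (hYd τ hτ).matMul hGd
    have e1 : Y τ * -(G τ * (M1 * Y τ - A τ * X τ) * G τ)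
        = -(E τ * M1 * E τ) + E τ * A τ := by
      calc Y τ * -(G τ * (M1 * Y τ - A τ * X τ) * G τ)
          = -((Y τ * G τ) * M1 * (Y τ * G τ)) + (Y τ * G τ) * A τ * (X τ * G τ) := by
            noncomm_ring
        _ = -(E τ * M1 * E τ) + E τ * A τ := by rw [hYG, hXG τ hτ, mul_one]
    have e2 : ((A τ)ᵀ * Y τ + Q * X τ) * G τ = (A τ)ᵀ * E τ + Q := by
      rw [add_mul, mul_assoc, hYG, mul_assoc, hXG τ hτ, mul_one]
    have hvals : Y τ * -(G τ * (M1 * Y τ - A τ * X τ) * G τ)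
        + ((A τ)ᵀ * Y τ + Q * X τ) * G τ
        = (A τ)ᵀ * E τ + Q + E τ * A τ - E τ * M1 * E τ := by
      rw [e1, e2]
      abel
    rw [← hvals]
    exact h
  -- assemble H2
  set D : ℝ → Matrix (Fin d) (Fin d) ℝ := fun t => E (T - t) with hDdef
  set H2 : ℝ → Matrix (Fin d) (Fin d) ℝ := fun t => H1 t - D t with hH2def
  have hDD : ∀ t, H1 t - D t = H2 t := fun _ => rfl
  have hmem : ∀ t ∈ Set.Icc (0:ℝ) T, T - t ∈ Set.Icc (0:ℝ) T := by
    intro t ht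
    exact ⟨by linarith [ht.2], by linarith [ht.1]⟩
  refine ⟨H2, ?_, ?_, ?_, ?_⟩
  · intro t ht
    rw [← hDD t, Matrix.transpose_sub, hH1sym t ht]
    have : (D t)ᵀ = D t := hEsym _ (hmem t ht)
    rw [this]
  · intro t ht
    have htm := hmem t ht
    have hDd : HasDerivAt D
        (-((A (T-t))ᵀ * E (T-t) + Q + E (T-t) * A (T-t) - E (T-t) * M1 * E (T-t))) t := by
      have hinner : HasDerivAt (fun s : ℝ => T - s) (-1 : ℝ) t := by
        simpa using (hasDerivAt_id t).const_sub T
      have h := (hEd (T - t) htm).scomp t hinner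
      simp [Function.comp_def] at h
      rw [neg_sub]
      exact h
    have h := (hH1 t ht).sub hDd
    have hAval : A (T - t) = M1 * H1 t + M2 := by
      rw [hAdef]
      simp only
      rw [show T - (T - t) = t by ring, hH1ceq t ht]
    have hAvalT : (A (T - t))ᵀ = H1 t * M1 + M2ᵀ := by
      rw [hAval, Matrix.transpose_add, Matrix.transpose_mul, hM1t, hH1sym t ht]
    have hgoal : -(H2 t * M1 * H2 t + M2ᵀ * H2 t + H2 t * M2 + N2)
        = -(H1 t * M1 * H1 t + M2ᵀ * H1 t + H1 t * M2 + N1)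
          - -((A (T-t))ᵀ * E (T-t) + Q + E (T-t) * A (T-t) - E (T-t) * M1 * E (T-t)) := by
      rw [hAvalT, hAval, ← hDD t, hQdef, hDdef]
      noncomm_ring
    rw [hgoal]
    exact h
  · show H1 T - D T = S2
    have hDT : D T = S := by
      show E (T - T) = S
      rw [show T - T = (0:ℝ) by ring]
      show Y 0 * G 0 = S
      have hG0 : G 0 = 1 := by
        show (X 0)⁻¹ = 1
        rw [hX0]
        exact inv_one
      rw [hG0, hY0, mul_one]
    rw [hDT, hH1T, hSdef]
    abel
  · intro t ht
    have : H1 t - H2 t = D t := by rw [← hDD t]; abel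
    rw [this]
    exact hEpsd _ (hmem t ht)
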